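/- Let T : ℝ → ℝ² be polygonal with vertex times t₀ < t₁ < ... < t_n, let s > 0, and let x, y satisfy t₀ ≤ x ≤ y ≤ t_n. Suppose some tᵢ lies in [x,y]; let u be the least tᵢ ≥ x and v the greatest tᵢ ≤ y. Then H_s(T,[x,y]) ≤ max( H_s(T,[u,v]), D₋(u) + D₊(u), D₋(v) + D₊(v), max_i H_s(T,[max(x,tᵢ), min(y,tᵢ₊₁)]) ), where D₋, D₊ are taken with respect to [x,y] and the last maximum ranges over indices i with max(x,tᵢ) ≤ min(y,tᵢ₊₁). In particular, the hotspot weight of a general time window is at most the largest of: the hotspot weight of the window clipped to vertex times, twice the best square-contained duration ending/starting at u, twice that at v, and the hotspot weight within any single edge. -/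

import Mathlib

open Set

/-- `r` is an axis-parallel square of side `s`, i.e. `[p, p+s] × [q, q+s]`. -/
def IsAPSquare (s : ℝ) (r : Set (ℝ × ℝ)) : Prop :=
  ∃ p q : ℝ, r = Icc p (p + s) ×ˢ Icc q (q + s)

/-- The weight of a region `r` with respect to the trajectory `T` and the
time window `[u, v]`: the supremum of durations `d - c` of subtrajectories
`T_{cd}` (with `u ≤ c ≤ d ≤ v`) contained in `r`. -/
noncomputable def weight (T : ℝ → ℝ × ℝ) (u v : ℝ) (r : Set (ℝ × ℝ)) : ℝ :=
  sSup { w : ℝ | ∃ c d : ℝ, u ≤ c ∧ c ≤ d ∧ d ≤ v ∧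
    (∀ τ ∈ Icc c d, T τ ∈ r) ∧ w = d - c }

/-- The hotspot weight `H_s(T, [u, v])`: the supremum of the weights of all
axis-parallel squares of side `s` with respect to `T` and `[u, v]`. -/
noncomputable def hotspotWeight (s : ℝ) (T : ℝ → ℝ × ℝ) (u v : ℝ) : ℝ :=
  sSup { w : ℝ | ∃ r : Set (ℝ × ℝ), IsAPSquare s r ∧ w = weight T u v r }

/-- `D₋(t)` with respect to the window starting at `u`: the supremum of
durations `t - c` with `u ≤ c ≤ t` such that `T_{ct}` is contained in some
axis-parallel square of side `s`. -/
noncomputable def Dminus (s : ℝ) (T : ℝ → ℝ × ℝ) (u t : ℝ) : ℝ :=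
  sSup { w : ℝ | ∃ c : ℝ, u ≤ c ∧ c ≤ t ∧
    (∃ r : Set (ℝ × ℝ), IsAPSquare s r ∧ ∀ τ ∈ Icc c t, T τ ∈ r) ∧ w = t - c }

/-- `D₊(t)` with respect to the window ending at `v`: the supremum of
durations `d - t` with `t ≤ d ≤ v` such that `T_{td}` is contained in some
axis-parallel square of side `s`. -/
noncomputable def Dplus (s : ℝ) (T : ℝ → ℝ × ℝ) (v t : ℝ) : ℝ :=
  sSup { w : ℝ | ∃ d : ℝ, t ≤ d ∧ d ≤ v ∧
    (∃ r : Set (ℝ × ℝ), IsAPSquare s r ∧ ∀ τ ∈ Icc t d, T τ ∈ r) ∧ w = d - t }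

/-- For a polygonal trajectory, a general window `[x, y]`
containing some vertex time, with `u` the least vertex time `≥ x` and `v` the
greatest vertex time `≤ y`: the hotspot weight of `[x, y]` is at most the
largest of (1) the hotspot weight of the window clipped to vertex times
`[u, v]`, (2) `D₋(u) + D₊(u)`, (3) `D₋(v) + D₊(v)` (with `D₋`, `D₊` taken
with respect to `[x, y]`), and (4) the hotspot weight within any single edge
clipped to the window. -/
lemma weight_nonneg (T : ℝ → ℝ × ℝ) (a b : ℝ) (r : Set (ℝ × ℝ)) : 0 ≤ weight T a b r :=
  Real.sSup_nonneg (by rintro w ⟨c, d, h1, h2, h3, h4, rfl⟩; linarith)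

lemma sub_le_weight (T : ℝ → ℝ × ℝ) (a b : ℝ) (r : Set (ℝ × ℝ)) (c d : ℝ)
    (h1 : a ≤ c) (h2 : c ≤ d) (h3 : d ≤ b) (hT : ∀ τ ∈ Icc c d, T τ ∈ r) :
    d - c ≤ weight T a b r :=
  le_csSup ⟨b - a, by rintro w ⟨c', d', h1', h2', h3', _, rfl⟩; linarith⟩
    ⟨c, d, h1, h2, h3, hT, rfl⟩

lemma weight_le_max (T : ℝ → ℝ × ℝ) (a b : ℝ) (r : Set (ℝ × ℝ)) :
    weight T a b r ≤ max 0 (b - a) :=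
  Real.sSup_le (by rintro w ⟨c, d, h1, h2, h3, _, rfl⟩; exact le_max_of_le_right (by linarith))
    (le_max_left _ _)

lemma weight_le_hotspot (s : ℝ) (T : ℝ → ℝ × ℝ) (a b : ℝ) (r : Set (ℝ × ℝ))
    (hr : IsAPSquare s r) : weight T a b r ≤ hotspotWeight s T a b :=
  le_csSup ⟨max 0 (b - a), by rintro w ⟨r', _, rfl⟩; exact weight_le_max T a b r'⟩
    ⟨r, hr, rfl⟩

lemma hotspot_nonneg (s : ℝ) (T : ℝ → ℝ × ℝ) (a b : ℝ) :
    0 ≤ hotspotWeight s T a b :=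
  (weight_nonneg T a b (Icc 0 (0 + s) ×ˢ Icc 0 (0 + s))).trans
    (weight_le_hotspot s T a b _ ⟨0, 0, rfl⟩)

lemma le_Dminus (s : ℝ) (T : ℝ → ℝ × ℝ) (x u c : ℝ) (h1 : x ≤ c) (h2 : c ≤ u)
    (r : Set (ℝ × ℝ)) (hr : IsAPSquare s r) (hT : ∀ τ ∈ Icc c u, T τ ∈ r) :
    u - c ≤ Dminus s T x u :=
  le_csSup ⟨u - x, by rintro w ⟨c', h1', h2', _, rfl⟩; linarith⟩
    ⟨c, h1, h2, ⟨r, hr, hT⟩, rfl⟩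

lemma le_Dplus (s : ℝ) (T : ℝ → ℝ × ℝ) (y u d : ℝ) (h1 : u ≤ d) (h2 : d ≤ y)
    (r : Set (ℝ × ℝ)) (hr : IsAPSquare s r) (hT : ∀ τ ∈ Icc u d, T τ ∈ r) :
    d - u ≤ Dplus s T y u :=
  le_csSup ⟨y - u, by rintro w ⟨d', h1', h2', _, rfl⟩; linarith⟩
    ⟨d, h1, h2, ⟨r, hr, hT⟩, rfl⟩

theorem general_window_hotspotWeight_le (n : ℕ) (t : Fin (n + 1) → ℝ)
    (ht : StrictMono t) (T : ℝ → ℝ × ℝ) (s : ℝ) (hs : 0 < s)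
    (hcont : ContinuousOn T (Icc (t 0) (t (Fin.last n))))
    (haff : ∀ i : Fin n, ∃ A V : ℝ × ℝ,
      ∀ τ ∈ Icc (t i.castSucc) (t i.succ), T τ = A + τ • V)
    (x y : ℝ) (hx : t 0 ≤ x) (hxy : x ≤ y) (hy : y ≤ t (Fin.last n))
    (hex : ∃ i : Fin (n + 1), t i ∈ Icc x y)
    (u v : ℝ)
    (hu : IsLeast { z : ℝ | (∃ i : Fin (n + 1), z = t i) ∧ x ≤ z } u)
    (hv : IsGreatest { z : ℝ | (∃ i : Fin (n + 1), z = t i) ∧ z ≤ y } v) :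
    hotspotWeight s T x y ≤
      max (max (hotspotWeight s T u v)
            (max (Dminus s T x u + Dplus s T y u)
              (Dminus s T x v + Dplus s T y v)))
        (sSup { w : ℝ | ∃ i : Fin n,
            max x (t i.castSucc) ≤ min y (t i.succ) ∧
            w = hotspotWeight s T (max x (t i.castSucc)) (min y (t i.succ)) }) := by
  obtain ⟨i0, hi0⟩ := hex
  obtain ⟨⟨iu, hiu⟩, hxu⟩ := hu.1
  obtain ⟨⟨iv, hiv⟩, hvy⟩ := hv.1
  have huv : u ≤ v := le_trans (hu.2 ⟨⟨i0, rfl⟩, hi0.1⟩) (hv.2 ⟨⟨i0, rfl⟩, hi0.2⟩)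
  have huy : u ≤ y := huv.trans hvy
  have hxv : x ≤ v := hxu.trans huv
  set E := sSup { w : ℝ | ∃ i : Fin n,
      max x (t i.castSucc) ≤ min y (t i.succ) ∧
      w = hotspotWeight s T (max x (t i.castSucc)) (min y (t i.succ)) } with hEdef
  have hEbdd : BddAbove { w : ℝ | ∃ i : Fin n,
      max x (t i.castSucc) ≤ min y (t i.succ) ∧
      w = hotspotWeight s T (max x (t i.castSucc)) (min y (t i.succ)) } := by
    apply Set.Finite.bddAbove
    apply Set.Finite.subset (Set.finite_range
      (fun i : Fin n => hotspotWeight s T (max x (t i.castSucc)) (min y (t i.succ))))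
    rintro w ⟨i, -, rfl⟩
    exact ⟨i, rfl⟩
  have hRHS0 : 0 ≤ max (max (hotspotWeight s T u v)
            (max (Dminus s T x u + Dplus s T y u)
              (Dminus s T x v + Dplus s T y v))) E :=
    le_max_of_le_left (le_max_of_le_left (hotspot_nonneg s T u v))
  have hEle : E ≤ max (max (hotspotWeight s T u v)
            (max (Dminus s T x u + Dplus s T y u)
              (Dminus s T x v + Dplus s T y v))) E := le_max_right _ _
  apply Real.sSup_le _ hRHS0
  rintro w ⟨r, hr, rfl⟩
  apply Real.sSup_le _ hRHS0
  rintro w ⟨c, d, hxc, hcd, hdy, hTr, rfl⟩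
  rcases le_or_gt d u with hdu | hud
  · -- d ≤ u : inside the first clipped edge
    rcases eq_or_ne iu 0 with h0 | h0
    · -- u = t 0, so u = x and d - c ≤ 0
      have : u ≤ x := by rw [hiu, h0]; exact hx
      have : d - c ≤ 0 := by linarith
      linarith
    · obtain ⟨j, rfl⟩ := Fin.exists_succ_eq.mpr h0
      have hjlt : t j.castSucc < u := by rw [hiu]; exact ht ((Fin.castSucc_lt_succ (i := j)))
      have hjx : t j.castSucc ≤ x := by
        by_contra h
        exact absurd (hu.2 ⟨⟨j.castSucc, rfl⟩, (not_le.mp h).le⟩) (not_le.mpr hjlt)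
      have hwin : max x (t j.castSucc) = x := max_eq_left hjx
      have hwin2 : min y (t j.succ) = u := by rw [← hiu]; exact min_eq_right huy
      have h1 : d - c ≤ hotspotWeight s T x u :=
        (sub_le_weight T x u r c d hxc hcd hdu hTr).trans (weight_le_hotspot s T x u r hr)
      have h2 : hotspotWeight s T x u ≤ E := by
        apply le_csSup hEbdd
        exact ⟨j, by rw [hwin, hwin2]; exact hxu, by rw [hwin, hwin2]⟩
      exact (h1.trans h2).trans hEle
  rcases le_or_gt c u with hcu | huc
  · -- c ≤ u ≤ d : split at u
    have h1 : u - c ≤ Dminus s T x u :=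
      le_Dminus s T x u c hxc hcu r hr fun τ hτ => hTr τ ⟨hτ.1, hτ.2.trans hud.le⟩
    have h2 : d - u ≤ Dplus s T y u :=
      le_Dplus s T y u d hud.le hdy r hr fun τ hτ => hTr τ ⟨hcu.trans hτ.1, hτ.2⟩
    have : d - c ≤ Dminus s T x u + Dplus s T y u := by linarith
    exact this.trans (le_max_of_le_left (le_max_of_le_right (le_max_left _ _)))
  rcases le_or_gt d v with hdv | hvd
  · -- u ≤ c ≤ d ≤ v
    have : d - c ≤ hotspotWeight s T u v :=
      (sub_le_weight T u v r c d huc.le hcd hdv hTr).trans (weight_le_hotspot s T u v r hr)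
    exact this.trans (le_max_of_le_left (le_max_left _ _))
  rcases le_or_gt c v with hcv | hvc
  · -- c ≤ v ≤ d : split at v
    have h1 : v - c ≤ Dminus s T x v :=
      le_Dminus s T x v c hxc hcv r hr fun τ hτ => hTr τ ⟨hτ.1, hτ.2.trans hvd.le⟩
    have h2 : d - v ≤ Dplus s T y v :=
      le_Dplus s T y v d hvd.le hdy r hr fun τ hτ => hTr τ ⟨hcv.trans hτ.1, hτ.2⟩
    have : d - c ≤ Dminus s T x v + Dplus s T y v := by linarith
    exact this.trans (le_max_of_le_left (le_max_of_le_right (le_max_right _ _)))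
  · -- v < c : inside the last clipped edge
    rcases eq_or_ne iv (Fin.last n) with hlast | hlast
    · have : y ≤ v := by rw [hiv, hlast]; exact hy
      have : d - c ≤ 0 := by linarith
      linarith
    · obtain ⟨j, rfl⟩ := Fin.exists_castSucc_eq.mpr hlast
      have hjgt : v < t j.succ := by rw [hiv]; exact ht ((Fin.castSucc_lt_succ (i := j)))
      have hjy : y ≤ t j.succ := by
        by_contra h
        exact absurd (hv.2 ⟨⟨j.succ, rfl⟩, (not_le.mp h).le⟩) (not_le.mpr hjgt)
      have hwin : max x (t j.castSucc) = v := by rw [← hiv]; exact max_eq_right hxv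
      have hwin2 : min y (t j.succ) = y := min_eq_left hjy
      have h1 : d - c ≤ hotspotWeight s T v y :=
        (sub_le_weight T v y r c d hvc.le hcd hdy hTr).trans (weight_le_hotspot s T v y r hr)
      have h2 : hotspotWeight s T v y ≤ E := by
        apply le_csSup hEbdd
        exact ⟨j, by rw [hwin, hwin2]; exact hvy, by rw [hwin, hwin2]⟩
      exact (h1.trans h2).trans hEle
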